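/- Let π be a group, H a normal subgroup of π of finite index, and K a subgroup of H. Then the action of H by left multiplication on the coset space π/K is amenable if and only if the action of H by left multiplication on the coset space H/K is amenable. -/

import Mathlib

/-- A real-valued function is bounded. -/
def Bdd {X : Type*} (f : X → ℝ) : Prop := ∃ C : ℝ, ∀ x, |f x| ≤ C

/-- `μ` is a `Γ`-invariant mean for the action of `Γ` on `X`: an ℝ-linear functional on
the space of bounded functions `X → ℝ` lying between the infimum and the supremum, and
invariant under the action of `Γ`. -/
def IsInvariantMean (Γ : Type*) {X : Type*} [Group Γ] [MulAction Γ X]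
    (μ : (X → ℝ) → ℝ) : Prop :=
  (∀ f g : X → ℝ, Bdd f → Bdd g → μ (f + g) = μ f + μ g) ∧
  (∀ (c : ℝ) (f : X → ℝ), Bdd f → μ (c • f) = c * μ f) ∧
  (∀ f : X → ℝ, Bdd f → sInf (Set.range f) ≤ μ f ∧ μ f ≤ sSup (Set.range f)) ∧
  (∀ (g : Γ) (f : X → ℝ), Bdd f → μ (fun x => f (g • x)) = μ f)

/-- The action of `Γ` on `X` is amenable if it admits a `Γ`-invariant mean. -/
def AmenableAction (Γ X : Type*) [Group Γ] [MulAction Γ X] : Prop :=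
  ∃ μ : (X → ℝ) → ℝ, IsInvariantMean Γ μ

/-- A group is amenable if its action on itself by left multiplication is amenable. -/
def AmenableGroup (G : Type*) [Group G] : Prop := AmenableAction G G

namespace AmenAux

lemma bdd_add {X : Type*} {f g : X → ℝ} (hf : Bdd f) (hg : Bdd g) : Bdd (f + g) := by
  obtain ⟨C, hC⟩ := hf; obtain ⟨D, hD⟩ := hg
  exact ⟨C + D, fun x => (abs_add_le _ _).trans (add_le_add (hC x) (hD x))⟩

lemma bdd_smul {X : Type*} (c : ℝ) {f : X → ℝ} (hf : Bdd f) : Bdd (c • f) := by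
  obtain ⟨C, hC⟩ := hf
  exact ⟨|c| * C, fun x => by
    simp only [Pi.smul_apply, smul_eq_mul, abs_mul]
    exact mul_le_mul_of_nonneg_left (hC x) (abs_nonneg c)⟩

lemma bdd_const {X : Type*} (c : ℝ) : Bdd (fun _ : X => c) := ⟨|c|, fun _ => le_rfl⟩

lemma bdd_neg {X : Type*} {f : X → ℝ} (hf : Bdd f) : Bdd (-f) := by
  obtain ⟨C, hC⟩ := hf
  exact ⟨C, fun x => by simpa using hC x⟩

lemma bdd_sub {X : Type*} {f g : X → ℝ} (hf : Bdd f) (hg : Bdd g) : Bdd (f - g) := by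
  have := bdd_add hf (bdd_neg hg); simpa [sub_eq_add_neg] using this

lemma le_apply_and_apply_le {X : Type*} [Nonempty X] {f : X → ℝ} (hf : Bdd f) (x : X) :
    sInf (Set.range f) ≤ f x ∧ f x ≤ sSup (Set.range f) := by
  obtain ⟨C, hC⟩ := hf
  constructor
  · exact csInf_le ⟨-C, fun y ⟨z, hz⟩ => hz ▸ neg_le_of_abs_le (hC z)⟩ ⟨x, rfl⟩
  · exact le_csSup ⟨C, fun y ⟨z, hz⟩ => hz ▸ le_of_abs_le (hC z)⟩ ⟨x, rfl⟩

section Mean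
variable {Γ X : Type*} [Group Γ] [MulAction Γ X] {μ : (X → ℝ) → ℝ}
  (hμ : IsInvariantMean Γ μ)

include hμ

lemma mean_const [Nonempty X] (c : ℝ) : μ (fun _ => c) = c := by
  have h := hμ.2.2.1 (fun _ => c) (bdd_const c)
  have hr : Set.range (fun _ : X => c) = {c} := by
    ext y; simp [eq_comm]
  rw [hr, csInf_singleton, csSup_singleton] at h
  linarith [h.1, h.2]

lemma mean_nonneg [Nonempty X] {f : X → ℝ} (hf : Bdd f) (h0 : ∀ x, 0 ≤ f x) :
    0 ≤ μ f := by
  refine le_trans ?_ (hμ.2.2.1 f hf).1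
  obtain ⟨x⟩ := ‹Nonempty X›
  exact le_csInf ⟨f x, x, rfl⟩ (fun y ⟨z, hz⟩ => hz ▸ h0 z)

lemma mean_sub {f g : X → ℝ} (hf : Bdd f) (hg : Bdd g) : μ (f - g) = μ f - μ g := by
  have h1 : μ ((f - g) + g) = μ (f - g) + μ g := hμ.1 _ _ (bdd_sub hf hg) hg
  rw [sub_add_cancel] at h1
  linarith

omit hμ in
lemma bdd_sum {ι : Type*} (s : Finset ι) (F : ι → X → ℝ) (hF : ∀ i, Bdd (F i)) :
    Bdd (fun x => ∑ i ∈ s, F i x) := by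
  classical
  induction s using Finset.cons_induction with
  | empty => simpa using bdd_const (X := X) 0
  | cons a t ha ih =>
    simp only [Finset.sum_cons]
    exact bdd_add (hF a) ih

lemma mean_sum {ι : Type*} (s : Finset ι) (F : ι → X → ℝ) (hF : ∀ i, Bdd (F i)) :
    μ (fun x => ∑ i ∈ s, F i x) = ∑ i ∈ s, μ (F i) := by
  classical
  induction s using Finset.cons_induction with
  | empty =>
    simp only [Finset.sum_empty]
    have := hμ.2.1 0 (fun _ => (1:ℝ)) (bdd_const 1)
    simp at this; exact this
  | cons a t ha ih =>
    have h := hμ.1 (F a) (fun x => ∑ i ∈ t, F i x) (hF a) (bdd_sum t F hF)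
    simp only [Finset.sum_cons]
    calc μ (fun x => F a x + ∑ i ∈ t, F i x) = μ (F a) + μ (fun x => ∑ i ∈ t, F i x) := h
      _ = μ (F a) + ∑ i ∈ t, μ (F i) := by rw [ih]

end Mean

section Emb

variable {π : Type*} [Group π] (K H : Subgroup π)

/-- The embedding `H ⧸ K' → π ⧸ K`, `hK' ↦ (g h) K`. -/
def eMap (g : π) (y : H ⧸ K.subgroupOf H) : π ⧸ K :=
  Quotient.liftOn' y (fun h => (QuotientGroup.mk (g * (h : π)) : π ⧸ K))
    (by
      intro h₁ h₂ hr
      have hr2 : h₁⁻¹ * h₂ ∈ K.subgroupOf H := QuotientGroup.leftRel_apply.mp hr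
      have hr3 : (h₁ : π)⁻¹ * (h₂ : π) ∈ K := by
        have := Subgroup.mem_subgroupOf.mp hr2
        push_cast at this
        exact this
      show (QuotientGroup.mk (g * (h₁ : π)) : π ⧸ K) = QuotientGroup.mk (g * (h₂ : π))
      rw [QuotientGroup.eq]
      have h3 : (g * (h₁:π))⁻¹ * (g * (h₂:π)) = (h₁:π)⁻¹ * (h₂:π) := by group
      rw [h3]
      exact hr3)

lemma eMap_mk (g : π) (h : H) :
    eMap K H g (QuotientGroup.mk h) = QuotientGroup.mk (g * (h : π)) := rfl

lemma eMap_injective (g : π) : Function.Injective (eMap K H g) := by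
  intro y₁ y₂ h
  induction y₁ using QuotientGroup.induction_on with | _ h₁ =>
  induction y₂ using QuotientGroup.induction_on with | _ h₂ =>
  rw [eMap_mk, eMap_mk, QuotientGroup.eq] at h
  rw [QuotientGroup.eq, Subgroup.mem_subgroupOf]
  simpa [mul_assoc] using h

variable [H.Normal]

/-- Conjugation `h ↦ g h g⁻¹` as a map `H → H` (using normality). -/
def cg (g : π) (h : H) : H := ⟨g * (h : π) * g⁻¹, (‹H.Normal›).conj_mem (h : π) h.2 g⟩

lemma eMap_equivariant (g : π) (h : H) (y : H ⧸ K.subgroupOf H) :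
    eMap K H g (h • y) = (cg H g h) • (eMap K H g y) := by
  induction y using QuotientGroup.induction_on with | _ h₁ =>
  show eMap K H g (QuotientGroup.mk (h * h₁)) = _
  rw [eMap_mk]
  show _ = QuotientGroup.mk ((g * (h : π) * g⁻¹) * (g * (h₁ : π)))
  congr 1
  push_cast
  group

lemma eMap_equivariant' (g : π) (h : H) (y : H ⧸ K.subgroupOf H) :
    (h : H) • eMap K H g y = eMap K H g ((cg H g⁻¹ h) • y) := by
  rw [eMap_equivariant]
  congr 1
  ext
  show (h : π) = g * (g⁻¹ * (h : π) * g⁻¹⁻¹) * g⁻¹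
  group

/-- Extension by zero of a function on `H ⧸ K'` along `eMap g`. -/
noncomputable def extFun (g : π) (f : H ⧸ K.subgroupOf H → ℝ) (x : π ⧸ K) : ℝ :=
  open Classical in
  if hx : ∃ y, eMap K H g y = x then f hx.choose else 0

lemma extFun_apply (g : π) (f : H ⧸ K.subgroupOf H → ℝ) (y : H ⧸ K.subgroupOf H) :
    extFun K H g f (eMap K H g y) = f y := by
  have hx : ∃ y', eMap K H g y' = eMap K H g y := ⟨y, rfl⟩
  rw [extFun, dif_pos hx, eMap_injective K H g hx.choose_spec]

lemma extFun_not_mem (g : π) (f : H ⧸ K.subgroupOf H → ℝ) (x : π ⧸ K)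
    (hx : ¬ ∃ y, eMap K H g y = x) : extFun K H g f x = 0 := dif_neg hx

lemma extFun_bdd (g : π) {f : H ⧸ K.subgroupOf H → ℝ} (hf : Bdd f) :
    Bdd (extFun K H g f) := by
  obtain ⟨C, hC⟩ := hf
  refine ⟨max C 0, fun x => ?_⟩
  rw [extFun]
  split
  · exact le_trans (hC _) (le_max_left _ _)
  · simp

lemma extFun_comp_smul (g : π) (f : H ⧸ K.subgroupOf H → ℝ) (h : H) (x : π ⧸ K) :
    extFun K H g (fun y => f (h • y)) x = extFun K H g f ((cg H g h) • x) := by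
  by_cases hx : ∃ y, eMap K H g y = x
  · obtain ⟨y, rfl⟩ := hx
    rw [extFun_apply, ← eMap_equivariant, extFun_apply]
  · rw [extFun_not_mem K H g _ _ hx, extFun_not_mem]
    rintro ⟨y, hy⟩
    refine hx ⟨(cg H g⁻¹ ((cg H g h)⁻¹)) • y, ?_⟩
    rw [← eMap_equivariant', hy, ← mul_smul, inv_mul_cancel, one_smul]

lemma extFun_add (g : π) (f₁ f₂ : H ⧸ K.subgroupOf H → ℝ) :
    extFun K H g (f₁ + f₂) = extFun K H g f₁ + extFun K H g f₂ := by
  funext x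
  by_cases hx : ∃ y, eMap K H g y = x
  · obtain ⟨y, rfl⟩ := hx
    simp [extFun_apply]
  · simp [extFun_not_mem K H g _ _ hx]

lemma extFun_smul (g : π) (c : ℝ) (f : H ⧸ K.subgroupOf H → ℝ) :
    extFun K H g (c • f) = c • extFun K H g f := by
  funext x
  by_cases hx : ∃ y, eMap K H g y = x
  · obtain ⟨y, rfl⟩ := hx
    simp [extFun_apply]
  · simp [extFun_not_mem K H g _ _ hx]

/-- The natural projection `π ⧸ K → π ⧸ H` when `K ≤ H`. -/
def qbar (hKH : K ≤ H) : π ⧸ K → π ⧸ H :=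
  Quotient.map' id (fun a b hab =>
    QuotientGroup.leftRel_apply.mpr (hKH (QuotientGroup.leftRel_apply.mp hab)))

omit [H.Normal] in
lemma qbar_mk (hKH : K ≤ H) (a : π) :
    qbar K H hKH (QuotientGroup.mk a) = QuotientGroup.mk a := rfl

omit [H.Normal] in
lemma eMap_range (hKH : K ≤ H) (g : π) (x : π ⧸ K) :
    (∃ y, eMap K H g y = x) ↔ qbar K H hKH x = QuotientGroup.mk g := by
  induction x using QuotientGroup.induction_on with | _ a =>
  rw [qbar_mk]
  constructor
  · rintro ⟨y, hy⟩
    induction y using QuotientGroup.induction_on with | _ h =>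
    rw [eMap_mk, QuotientGroup.eq] at hy
    rw [QuotientGroup.eq]
    have h1 : a⁻¹ * g = (((g * (h : π))⁻¹ * a)⁻¹ * (h : π)⁻¹ : π) := by group
    rw [h1]
    exact H.mul_mem (H.inv_mem (hKH hy)) (H.inv_mem h.2)
  · intro ha
    rw [QuotientGroup.eq] at ha
    refine ⟨QuotientGroup.mk ⟨g⁻¹ * a, ?_⟩, ?_⟩
    · have := H.inv_mem ha
      simpa using this
    · rw [eMap_mk]
      simp

end Emb

end AmenAux


open AmenAux in
/-- If `H` is a normal subgroup of `π` of finite index and `K ≤ H`, then the action of `H`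
by left multiplication on `π ⧸ K` is amenable iff the action of `H` by left multiplication
on `H ⧸ K` is amenable. -/
theorem amenableAction_quotient_iff_of_finiteIndex (π : Type*) [Group π]
    (K H : Subgroup π) (hKH : K ≤ H) [H.Normal] [H.FiniteIndex] :
    AmenableAction H (π ⧸ K) ↔ AmenableAction H (H ⧸ K.subgroupOf H) := by
  classical
  haveI : Nonempty (π ⧸ K) := ⟨QuotientGroup.mk 1⟩
  haveI : Nonempty (H ⧸ K.subgroupOf H) := ⟨QuotientGroup.mk 1⟩
  constructor
  · rintro ⟨μ, hμ⟩
    haveI : Fintype (π ⧸ H) := Fintype.ofFinite _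
    set q := qbar K H hKH with hq
    set χ : (π ⧸ H) → (π ⧸ K) → ℝ := fun c x => if q x = c then 1 else 0 with hχ
    have χbdd : ∀ c, Bdd (χ c) := fun c =>
      ⟨1, fun x => by by_cases h : q x = c <;> simp [hχ, h]⟩
    have h1 : μ (fun x => ∑ c, χ c x) = ∑ c, μ (χ c) := mean_sum hμ _ _ χbdd
    have h2 : μ (fun x => ∑ c, χ c x) = 1 := by
      have hsum : (fun x => ∑ c, χ c x) = fun _ => (1:ℝ) := by
        funext x; simp [hχ]
      rw [hsum]; exact mean_const hμ 1
    have hex : ∃ c, 0 < μ (χ c) := by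
      by_contra hc
      push_neg at hc
      have hle : (∑ c, μ (χ c)) ≤ 0 := Finset.sum_nonpos (fun c _ => hc c)
      rw [← h1, h2] at hle; linarith
    obtain ⟨c, hcpos⟩ := hex
    obtain ⟨g, hg⟩ := Quotient.exists_rep c
    have hg' : QuotientGroup.mk g = c := hg
    have hchi : χ c = extFun K H g (fun _ => 1) := by
      funext x
      by_cases hx : ∃ y, eMap K H g y = x
      · have hqx : q x = c := by rw [hq, (eMap_range K H hKH g x).mp hx, hg']
        obtain ⟨y, rfl⟩ := hx
        rw [extFun_apply]
        simp [hχ, hqx]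
      · have hqx : ¬ q x = c := fun hqc =>
          hx ((eMap_range K H hKH g x).mpr (by rw [← hq, hqc, hg']))
        rw [extFun_not_mem K H g _ _ hx]
        simp [hχ, hqx]
    set α := μ (χ c) with hα
    have hαe : μ (extFun K H g (fun _ => 1)) = α := by rw [hα, hchi]
    refine ⟨fun f => μ (extFun K H g f) / α, ?_, ?_, ?_, ?_⟩
    · intro f₁ f₂ hf₁ hf₂
      show μ (extFun K H g (f₁ + f₂)) / α = μ (extFun K H g f₁) / α + μ (extFun K H g f₂) / α
      rw [extFun_add, hμ.1 _ _ (extFun_bdd K H g hf₁) (extFun_bdd K H g hf₂), ← add_div]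
    · intro cc f hf
      show μ (extFun K H g (cc • f)) / α = cc * (μ (extFun K H g f) / α)
      rw [extFun_smul]
      have := hμ.2.1 cc (extFun K H g f) (extFun_bdd K H g hf)
      rw [this, mul_div_assoc]
    · intro f hf
      have hb := fun y => le_apply_and_apply_le hf y
      constructor
      · rw [le_div_iff₀ hcpos]
        have hpt : ∀ x, 0 ≤ (extFun K H g f - (sInf (Set.range f)) • extFun K H g (fun _ => 1)) x := by
          intro x
          by_cases hx : ∃ y, eMap K H g y = x
          · obtain ⟨y, rfl⟩ := hx
            simp only [Pi.sub_apply, Pi.smul_apply, smul_eq_mul, extFun_apply]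
            linarith [(hb y).1]
          · simp [extFun_not_mem K H g _ _ hx]
        have hbd : Bdd (extFun K H g f - (sInf (Set.range f)) • extFun K H g (fun _ => 1)) :=
          bdd_sub (extFun_bdd K H g hf) (bdd_smul _ (extFun_bdd K H g (bdd_const 1)))
        have h0 := mean_nonneg hμ hbd hpt
        rw [mean_sub hμ (extFun_bdd K H g hf) (bdd_smul _ (extFun_bdd K H g (bdd_const 1))),
          hμ.2.1 _ _ (extFun_bdd K H g (bdd_const 1)), hαe] at h0
        linarith
      · rw [div_le_iff₀ hcpos]
        have hpt : ∀ x, 0 ≤ ((sSup (Set.range f)) • extFun K H g (fun _ => 1) - extFun K H g f) x := by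
          intro x
          by_cases hx : ∃ y, eMap K H g y = x
          · obtain ⟨y, rfl⟩ := hx
            simp only [Pi.sub_apply, Pi.smul_apply, smul_eq_mul, extFun_apply]
            linarith [(hb y).2]
          · simp [extFun_not_mem K H g _ _ hx]
        have hbd : Bdd ((sSup (Set.range f)) • extFun K H g (fun _ => 1) - extFun K H g f) :=
          bdd_sub (bdd_smul _ (extFun_bdd K H g (bdd_const 1))) (extFun_bdd K H g hf)
        have h0 := mean_nonneg hμ hbd hpt
        rw [mean_sub hμ (bdd_smul _ (extFun_bdd K H g (bdd_const 1))) (extFun_bdd K H g hf),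
          hμ.2.1 _ _ (extFun_bdd K H g (bdd_const 1)), hαe] at h0
        linarith
    · intro h f hf
      have hco : extFun K H g (fun y => f (h • y)) = fun x => extFun K H g f ((cg H g h) • x) :=
        funext (extFun_comp_smul K H g f h)
      show μ (extFun K H g (fun y => f (h • y))) / α = μ (extFun K H g f) / α
      rw [hco, hμ.2.2.2 (cg H g h) _ (extFun_bdd K H g hf)]
  · rintro ⟨ν, hν⟩
    refine ⟨fun F => ν (fun y => F (eMap K H 1 y)), ?_, ?_, ?_, ?_⟩
    · intro F G hF hG
      obtain ⟨C, hC⟩ := hF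
      obtain ⟨D, hD⟩ := hG
      exact hν.1 (fun y => F (eMap K H 1 y)) (fun y => G (eMap K H 1 y))
        ⟨C, fun y => hC _⟩ ⟨D, fun y => hD _⟩
    · intro cc F hF
      obtain ⟨C, hC⟩ := hF
      exact hν.2.1 cc (fun y => F (eMap K H 1 y)) ⟨C, fun y => hC _⟩
    · intro F hF
      obtain ⟨C, hC⟩ := hF
      have hb := hν.2.2.1 (fun y => F (eMap K H 1 y)) ⟨C, fun y => hC _⟩
      have hsub : Set.range (fun y => F (eMap K H 1 y)) ⊆ Set.range F := by
        rintro _ ⟨y, rfl⟩; exact ⟨_, rfl⟩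
      have hne : (Set.range (fun y => F (eMap K H 1 y))).Nonempty := Set.range_nonempty _
      constructor
      · refine le_trans (csInf_le_csInf ?_ hne hsub) hb.1
        exact ⟨-C, fun r ⟨z, hz⟩ => hz ▸ neg_le_of_abs_le (hC z)⟩
      · refine le_trans hb.2 (csSup_le_csSup ?_ hne hsub)
        exact ⟨C, fun r ⟨z, hz⟩ => hz ▸ le_of_abs_le (hC z)⟩
    · intro h F hF
      obtain ⟨C, hC⟩ := hF
      have hco : (fun y => F (h • eMap K H 1 y)) =
          fun y => F (eMap K H 1 ((cg H 1⁻¹ h) • y)) := by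
        funext y
        rw [eMap_equivariant']
      show ν (fun y => F (h • eMap K H 1 y)) = _
      rw [hco]
      exact hν.2.2.2 (cg H 1⁻¹ h) (fun y => F (eMap K H 1 y)) ⟨C, fun y => hC _⟩
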